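/- Suppose the state digraph D(Ā) is irreducible (strongly connected, so q = 1) and the state bipartite graph B(Ā) has a perfect matching. Then for any nonempty set of inputs, picking the single input j* minimizing p_u(j) among inputs with at least one edge into a state yields an optimal solution to the minimum cost constrained input selection problem: (Ā, B̄_{{j*}}) is structurally controllable and p({j*}) ≤ p(W) for every W with (Ā,B̄_W) structurally controllable. -/
import Mathlib


open scoped Classical

/-- Edge relation of the system digraph `D(Ā, B̄_W)` restricted to the inputs in
`W`: edge `x_j → x_i` iff `Ā i j ≠ 0`, and `u_j → x_i` iff `B̄ i j ≠ 0` and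
`j ∈ W`. -/
def sysEW {n m : ℕ} (A : Fin n → Fin n → Bool) (B : Fin n → Fin m → Bool)
    (W : Finset (Fin m)) : Fin n ⊕ Fin m → Fin n ⊕ Fin m → Prop
  | Sum.inl j, Sum.inl i => A i j = true
  | Sum.inr j, Sum.inl i => B i j = true ∧ j ∈ W
  | _, _ => False

/-- Edge relation of the bipartite graph `B(Ā, B̄_W)`: left vertex `x_r`
(`inl r`) or `u_j` (`inr j`, with `j ∈ W`) adjacent to right vertex `x'_k`. -/
def bipEW {n m : ℕ} (A : Fin n → Fin n → Bool) (B : Fin n → Fin m → Bool)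
    (W : Finset (Fin m)) : Fin n ⊕ Fin m → Fin n → Prop
  | Sum.inl r, k => A k r = true
  | Sum.inr j, k => B k j = true ∧ j ∈ W

/-- Structural controllability of the restricted system `(Ā, B̄_W)`: every state
is reachable from some input in `W`, and `B(Ā,B̄_W)` has a matching saturating
the right vertices `x'₁,…,x'ₙ`. -/
def SCsel {n m : ℕ} (A : Fin n → Fin n → Bool) (B : Fin n → Fin m → Bool)
    (W : Finset (Fin m)) : Prop :=
  (∀ i : Fin n, ∃ j ∈ W,
      Relation.ReflTransGen (sysEW A B W) (Sum.inr j) (Sum.inl i)) ∧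
    ∃ M : Fin n → Fin n ⊕ Fin m, Function.Injective M ∧ ∀ k : Fin n, bipEW A B W (M k) k

/-- Corollary 3. Suppose the state digraph `D(Ā)` is
irreducible (every state reaches every state) and the state bipartite graph
`B(Ā)` has a perfect matching. Then picking the single input `jstar`
minimizing the nonnegative cost `p` among the inputs having at least one edge
into a state yields an optimal solution of the minimum cost constrained input
selection problem: `(Ā, B̄_{{jstar}})` is structurally controllable, and
`p({jstar}) ≤ p(W)` for every `W` with `(Ā, B̄_W)` structurally controllable. -/
theorem stmt19 {n m : ℕ} (hn : 0 < n)
    (A : Fin n → Fin n → Bool) (B : Fin n → Fin m → Bool)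
    (p : Fin m → ℝ) (hp : ∀ j : Fin m, 0 ≤ p j)
    (hirr : ∀ i k : Fin n,
      Relation.ReflTransGen (fun a b : Fin n => A b a = true) i k)
    (hpm : ∃ M : Fin n → Fin n, Function.Injective M ∧ ∀ k : Fin n, A k (M k) = true)
    (jstar : Fin m) (hjstar : ∃ r : Fin n, B r jstar = true)
    (hmin : ∀ j : Fin m, (∃ r : Fin n, B r j = true) → p jstar ≤ p j) :
    SCsel A B {jstar} ∧
      ∀ W : Finset (Fin m), SCsel A B W → p jstar ≤ ∑ j ∈ W, p j := by
  obtain ⟨r, hr⟩ := hjstar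
  obtain ⟨M, hMinj, hM⟩ := hpm
  constructor
  · constructor
    · intro i
      refine ⟨jstar, Finset.mem_singleton_self _, ?_⟩
      have h1 : sysEW A B {jstar} (Sum.inr jstar) (Sum.inl r) :=
        ⟨hr, Finset.mem_singleton_self _⟩
      have h2 : Relation.ReflTransGen (sysEW A B ({jstar} : Finset (Fin m)))
          (Sum.inl r) (Sum.inl i) := by
        have := hirr r i
        induction this with
        | refl => exact Relation.ReflTransGen.refl
        | tail _ hbc ih => exact ih.tail hbc
      exact Relation.ReflTransGen.head h1 h2
    · exact ⟨fun k => Sum.inl (M k), fun a b hab => hMinj (Sum.inl.inj hab),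
        fun k => hM k⟩
  · intro W ⟨hreach, _⟩
    obtain ⟨j, hjW, hpath⟩ := hreach ⟨0, hn⟩
    have hBj : ∃ r : Fin n, B r j = true := by
      rcases hpath.cases_head with h | ⟨c, hc, _⟩
      · exact absurd h (by simp)
      · cases c with
        | inl s => exact ⟨s, hc.1⟩
        | inr s => exact absurd hc (by simp [sysEW])
    calc p jstar ≤ p j := hmin j hBj
    _ ≤ ∑ j ∈ W, p j := Finset.single_le_sum (fun i _ => hp i) hjW
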